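/- Let ν₀ be a probability measure on C(Ω;ℝ), and fix points x₁,…,x_m ∈ Ω and signs y₁,…,y_m ∈ {±1} such that ν₀({u : u(x_j) = 0 for some j}) = 0 and ν₀(B) > 0 where B = {u : y_j u(x_j) > 0 for all j}. For γ > 0 define Φ_γ(u) = Σ_j (1/(2γ²))|y_j − S(u(x_j))|², where S is the sign function, and the measure ν_γ(du) = Z_γ^{−1} e^{−Φ_γ(u)} ν₀(du). Then ν_γ converges weakly, as γ → 0, to the conditioned measure ν(du) = ν₀(B)^{−1} 1_B(u) ν₀(du). -/

import Mathlib

open MeasureTheory Filter Topology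

/-- The sign function: `S(t) = 1` for `t > 0`, `−1` for `t < 0`, `S(0) = 0`. -/
noncomputable def signFun (t : ℝ) : ℝ :=
  if t > 0 then 1 else if t < 0 then -1 else 0

/-- The Bayesian level set misfit `Φ_γ(u) = ∑_j (1/(2γ²))|y_j − S(u(x_j))|²`. -/
noncomputable def levelSetMisfit {Ω : Type*} [TopologicalSpace Ω]
    {m : ℕ} (x : Fin m → Ω) (y : Fin m → ℝ) (γ : ℝ) (u : C(Ω, ℝ)) : ℝ :=
  ∑ j, (1 / (2 * γ ^ 2)) * |y j - signFun (u (x j))| ^ 2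

/-- Small noise limit of the Bayesian level set posterior: `ν_γ ⇒ ν₀(·|B)` as `γ → 0⁺`,
where `B = {u : y_j u(x_j) > 0 ∀ j}`. Weak convergence is expressed as convergence of
integrals of all bounded continuous functionals. -/
theorem levelSet_small_noise_limit
    {Ω : Type*} [TopologicalSpace Ω]
    [MeasurableSpace C(Ω, ℝ)] [BorelSpace C(Ω, ℝ)]
    (ν₀ : Measure C(Ω, ℝ)) [IsProbabilityMeasure ν₀]
    (m : ℕ) (x : Fin m → Ω) (y : Fin m → ℝ)
    (hy : ∀ j, y j = 1 ∨ y j = -1)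
    (hzero : ν₀ {u : C(Ω, ℝ) | ∃ j, u (x j) = 0} = 0)
    (B : Set C(Ω, ℝ)) (hB : B = {u : C(Ω, ℝ) | ∀ j, y j * u (x j) > 0})
    (hBpos : 0 < ν₀ B)
    (νγ : ℝ → Measure C(Ω, ℝ))
    (hνγ : ∀ γ : ℝ, 0 < γ →
      νγ γ = (ENNReal.ofReal (∫ u, Real.exp (-(levelSetMisfit x y γ u)) ∂ν₀))⁻¹ •
        ν₀.withDensity (fun u => ENNReal.ofReal (Real.exp (-(levelSetMisfit x y γ u)))))
    (ν : Measure C(Ω, ℝ)) (hν : ν = (ν₀ B)⁻¹ • ν₀.restrict B) :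
    ∀ g : C(Ω, ℝ) → ℝ, Continuous g → (∃ M, ∀ u, |g u| ≤ M) →
      Tendsto (fun γ => ∫ u, g u ∂(νγ γ)) (nhdsWithin 0 (Set.Ioi 0))
        (𝓝 (∫ u, g u ∂ν)) := by
  intro g hg ⟨M, hM⟩
  -- basic measurability
  have hsign : Measurable signFun := by
    unfold signFun
    exact Measurable.ite measurableSet_Ioi measurable_const
      (Measurable.ite measurableSet_Iio measurable_const measurable_const)
  have heval : ∀ j, Measurable fun u : C(Ω, ℝ) => u (x j) := fun j =>
    (continuous_eval_const (x j)).measurable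
  have hΦmeas : ∀ γ, Measurable (levelSetMisfit x y γ) := by
    intro γ
    unfold levelSetMisfit
    exact Finset.measurable_sum _ fun j _ =>
      (measurable_const.sub ((hsign.comp (heval j)))).abs.pow_const 2 |>.const_mul _
  have hfmeas : ∀ γ, Measurable fun u => Real.exp (-(levelSetMisfit x y γ u)) := fun γ =>
    Real.measurable_exp.comp (hΦmeas γ).neg
  have hBmeas : MeasurableSet B := by
    rw [hB]
    have : {u : C(Ω, ℝ) | ∀ j, y j * u (x j) > 0} = ⋂ j, {u | 0 < y j * u (x j)} := by
      ext u; simp [Set.mem_iInter]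
    rw [this]
    exact MeasurableSet.iInter fun j =>
      measurableSet_lt measurable_const (measurable_const.mul (heval j))
  -- Φ nonneg and exp ≤ 1
  have hΦnonneg : ∀ γ u, 0 ≤ levelSetMisfit x y γ u := by
    intro γ u
    unfold levelSetMisfit
    exact Finset.sum_nonneg fun j _ => by positivity
  have hexp_le_one : ∀ γ u, Real.exp (-(levelSetMisfit x y γ u)) ≤ 1 := fun γ u =>
    Real.exp_le_one_iff.mpr (neg_nonpos.mpr (hΦnonneg γ u))
  -- Φ = 0 on B
  have hΦB : ∀ γ, ∀ u ∈ B, levelSetMisfit x y γ u = 0 := by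
    intro γ u hu
    rw [hB] at hu
    unfold levelSetMisfit
    refine Finset.sum_eq_zero fun j _ => ?_
    have hj := hu j
    have hs : signFun (u (x j)) = y j := by
      rcases hy j with h | h
      · rw [h] at hj ⊢
        simp only [one_mul] at hj
        unfold signFun; rw [if_pos hj]
      · rw [h] at hj ⊢
        have : u (x j) < 0 := by nlinarith
        unfold signFun; rw [if_neg (by linarith), if_pos this]
    simp [hs]
  -- Φ lower bound off B
  have hΦlb : ∀ γ : ℝ, 0 < γ → ∀ u : C(Ω, ℝ), (∀ j, u (x j) ≠ 0) → u ∉ B →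
      2 / γ ^ 2 ≤ levelSetMisfit x y γ u := by
    intro γ hγ u hu hmem
    rw [hB] at hmem
    simp only [Set.mem_setOf_eq, not_forall] at hmem
    obtain ⟨j, hj⟩ := hmem
    have hyj : y j ≠ 0 := by rcases hy j with h | h <;> rw [h] <;> norm_num
    have hlt : y j * u (x j) < 0 :=
      lt_of_le_of_ne (not_lt.mp hj) (mul_ne_zero hyj (hu j))
    have hs : signFun (u (x j)) = -(y j) := by
      rcases hy j with h | h
      · rw [h] at hlt ⊢
        have : u (x j) < 0 := by nlinarith
        unfold signFun; rw [if_neg (by linarith), if_pos this]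
      · rw [h] at hlt ⊢
        have : 0 < u (x j) := by nlinarith
        unfold signFun; rw [if_pos this]; norm_num
    have hterm : (1 / (2 * γ ^ 2)) * |y j - signFun (u (x j))| ^ 2 = 2 / γ ^ 2 := by
      rw [hs]
      have h2 : |y j - -(y j)| = 2 := by
        rcases hy j with h | h <;> rw [h] <;> norm_num
      rw [h2]
      field_simp
    calc 2 / γ ^ 2 = (1 / (2 * γ ^ 2)) * |y j - signFun (u (x j))| ^ 2 := hterm.symm
      _ ≤ levelSetMisfit x y γ u := by
          unfold levelSetMisfit
          exact Finset.single_le_sum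
            (f := fun i => (1 / (2 * γ ^ 2)) * |y i - signFun (u (x i))| ^ 2)
            (fun i _ => by positivity) (Finset.mem_univ j)
  -- a.e. nonvanishing
  have hae : ∀ᵐ u ∂ν₀, ∀ j, u (x j) ≠ 0 := by
    rw [ae_iff]
    have : {u : C(Ω, ℝ) | ¬∀ j, u (x j) ≠ 0} = {u : C(Ω, ℝ) | ∃ j, u (x j) = 0} := by
      ext u; simp
    rw [this]; exact hzero
  -- bound exp(-2/γ²) → 0
  have hsq : Tendsto (fun γ : ℝ => γ ^ 2) (𝓝[>] 0) (𝓝[>] 0) := by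
    apply tendsto_nhdsWithin_of_tendsto_nhds_of_eventually_within
    · have : Tendsto (fun γ : ℝ => γ ^ 2) (𝓝 0) (𝓝 0) := by
        simpa using (continuous_pow 2).tendsto (0 : ℝ)
      exact this.mono_left nhdsWithin_le_nhds
    · filter_upwards [self_mem_nhdsWithin] with γ hγ
      exact pow_pos (Set.mem_Ioi.mp hγ) 2
  have htop : Tendsto (fun γ : ℝ => 2 / γ ^ 2) (𝓝[>] 0) atTop := by
    simp only [div_eq_mul_inv]
    exact (tendsto_inv_nhdsGT_zero.comp hsq).const_mul_atTop two_pos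
  have hbound0 : Tendsto (fun γ : ℝ => Real.exp (-(2 / γ ^ 2))) (𝓝[>] 0) (𝓝 0) :=
    Real.tendsto_exp_atBot.comp (tendsto_neg_atBot_iff.mpr htop)
  -- pointwise a.e. limit
  have hlim : ∀ᵐ u ∂ν₀, Tendsto (fun γ => Real.exp (-(levelSetMisfit x y γ u))) (𝓝[>] 0)
      (𝓝 (B.indicator (fun _ => (1 : ℝ)) u)) := by
    filter_upwards [hae] with u hu
    by_cases hmem : u ∈ B
    · rw [Set.indicator_of_mem hmem]
      have : (fun γ => Real.exp (-(levelSetMisfit x y γ u))) = fun _ => 1 := by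
        funext γ; rw [hΦB γ u hmem]; simp
      rw [this]; exact tendsto_const_nhds
    · rw [Set.indicator_of_notMem hmem]
      apply squeeze_zero' (Eventually.of_forall fun γ => (Real.exp_pos _).le)
        ?_ hbound0
      filter_upwards [self_mem_nhdsWithin] with γ hγ
      exact Real.exp_le_exp.mpr (neg_le_neg (hΦlb γ hγ u hu hmem))
  -- DCT for the normalizing constant
  have hA : Tendsto (fun γ => ∫ u, Real.exp (-(levelSetMisfit x y γ u)) ∂ν₀) (𝓝[>] 0)
      (𝓝 ((ν₀ B).toReal)) := by
    have := tendsto_integral_filter_of_dominated_convergence (μ := ν₀)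
      (F := fun γ u => Real.exp (-(levelSetMisfit x y γ u)))
      (f := B.indicator fun _ => (1 : ℝ)) (bound := fun _ => 1)
      (Eventually.of_forall fun γ => (hfmeas γ).aestronglyMeasurable)
      (Eventually.of_forall fun γ => Eventually.of_forall fun u => by
        rw [Real.norm_eq_abs, abs_of_pos (Real.exp_pos _)]
        exact hexp_le_one γ u)
      (integrable_const 1) hlim
    have heq : ∫ a, B.indicator (fun _ => (1 : ℝ)) a ∂ν₀ = (ν₀ B).toReal := by
      rw [integral_indicator hBmeas, setIntegral_const, smul_eq_mul, mul_one]; rfl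
    rwa [heq] at this
  -- DCT for the numerator
  have hG : Tendsto (fun γ => ∫ u, Real.exp (-(levelSetMisfit x y γ u)) * g u ∂ν₀) (𝓝[>] 0)
      (𝓝 (∫ u in B, g u ∂ν₀)) := by
    have hind : ∀ u, B.indicator (fun _ => (1 : ℝ)) u * g u = B.indicator g u := by
      intro u
      by_cases hmem : u ∈ B <;>
        simp [Set.indicator_of_mem, Set.indicator_of_notMem, hmem]
    have := tendsto_integral_filter_of_dominated_convergence (μ := ν₀)
      (F := fun γ u => Real.exp (-(levelSetMisfit x y γ u)) * g u)
      (f := fun u => B.indicator (fun _ => (1 : ℝ)) u * g u) (bound := fun _ => M)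
      (Eventually.of_forall fun γ =>
        ((hfmeas γ).mul hg.measurable).aestronglyMeasurable)
      (Eventually.of_forall fun γ => Eventually.of_forall fun u => by
        rw [Real.norm_eq_abs, abs_mul, abs_of_pos (Real.exp_pos _)]
        calc Real.exp (-(levelSetMisfit x y γ u)) * |g u| ≤ 1 * |g u| := by
              apply mul_le_mul_of_nonneg_right (hexp_le_one γ u) (abs_nonneg _)
          _ = |g u| := one_mul _
          _ ≤ M := hM u)
      (integrable_const M)
      (by filter_upwards [hlim] with u hu
          exact hu.mul_const (g u))
    rw [show (∫ u, B.indicator (fun _ => (1 : ℝ)) u * g u ∂ν₀) = ∫ u in B, g u ∂ν₀ by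
      simp_rw [hind]; exact integral_indicator hBmeas] at this
    exact this
  -- rewrite the target integral
  have hνB_ne_top : ν₀ B ≠ ⊤ := measure_ne_top _ _
  have hνB_toReal_pos : 0 < (ν₀ B).toReal := ENNReal.toReal_pos hBpos.ne' hνB_ne_top
  have htarget : ∫ u, g u ∂ν = (ν₀ B).toReal⁻¹ * ∫ u in B, g u ∂ν₀ := by
    rw [hν, integral_smul_measure, ENNReal.toReal_inv, smul_eq_mul]
  rw [htarget]
  -- identify ∫ g dνγ for γ > 0
  apply Tendsto.congr' (f₁ := fun γ =>
    (∫ u, Real.exp (-(levelSetMisfit x y γ u)) ∂ν₀)⁻¹ *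
      ∫ u, Real.exp (-(levelSetMisfit x y γ u)) * g u ∂ν₀)
  · filter_upwards [self_mem_nhdsWithin] with γ hγ
    rw [hνγ γ hγ, integral_smul_measure]
    have hwd : ∫ u, g u ∂(ν₀.withDensity fun u =>
        ENNReal.ofReal (Real.exp (-(levelSetMisfit x y γ u)))) =
        ∫ u, Real.exp (-(levelSetMisfit x y γ u)) * g u ∂ν₀ := by
      have hrfl : (fun u => ENNReal.ofReal (Real.exp (-(levelSetMisfit x y γ u)))) =
          fun u => ((Real.exp (-(levelSetMisfit x y γ u))).toNNReal : ENNReal) := rfl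
      rw [hrfl, integral_withDensity_eq_integral_smul (hfmeas γ).real_toNNReal g]
      congr 1
      funext u
      rw [NNReal.smul_def, Real.coe_toNNReal _ (Real.exp_pos _).le, smul_eq_mul]
    rw [hwd, ENNReal.toReal_inv,
      ENNReal.toReal_ofReal (integral_nonneg fun u => (Real.exp_pos _).le), smul_eq_mul]
  · exact (hA.inv₀ hνB_toReal_pos.ne').mul hG
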